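/- With f₀ as above (a = (√5+1)/2, b = (√5-1)/2), one has x ≤ f₀(x) ≤ 0 for all x ∈ [−1,0]; in particular |f₀(x)| ≤ |x| on [−1,0]. -/

import Mathlib

noncomputable def aK : ℝ := (Real.sqrt 5 + 1) / 2
noncomputable def bK : ℝ := (Real.sqrt 5 - 1) / 2

noncomputable def f₀ : ℝ → ℝ := fun x =>
  1 / (Real.sqrt aK * (aK + bK)) * Real.sinh (Real.sqrt aK * x)
    - 1 / (Real.sqrt bK * (aK + bK)) * Real.sin (Real.sqrt bK * x)

noncomputable def g₀ : ℝ → ℝ := fun x =>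
  1 / (aK * (aK + bK)) * Real.cosh (Real.sqrt aK * x)
    + 1 / (bK * (aK + bK)) * Real.cos (Real.sqrt bK * x)
    - 1 / (aK * (aK + bK)) - 1 / (bK * (aK + bK))

lemma sqrt5_lb : (2.23 : ℝ) ≤ Real.sqrt 5 := by
  have := Real.sq_sqrt (by norm_num : (5:ℝ) ≥ 0)
  nlinarith [Real.sqrt_nonneg 5]

lemma sqrt5_ub : Real.sqrt 5 ≤ 2.24 := by
  have := Real.sq_sqrt (by norm_num : (5:ℝ) ≥ 0)
  nlinarith [Real.sqrt_nonneg 5]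

lemma aK_pos : 0 < aK := by
  unfold aK; nlinarith [sqrt5_lb]

lemma bK_pos : 0 < bK := by
  unfold bK; nlinarith [sqrt5_lb]

lemma aK_ub : aK ≤ 1.62 := by unfold aK; nlinarith [sqrt5_ub]

lemma bK_ub : bK ≤ 0.62 := by unfold bK; nlinarith [sqrt5_ub]

lemma sqrt_aK_pos : 0 < Real.sqrt aK := Real.sqrt_pos.2 aK_pos
lemma sqrt_bK_pos : 0 < Real.sqrt bK := Real.sqrt_pos.2 bK_pos

lemma sum_eq : aK + bK = Real.sqrt 5 := by unfold aK bK; ring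

lemma sqrt_aK_ub : Real.sqrt aK ≤ 1.28 := by
  have : aK ≤ (1.28:ℝ)^2 := by nlinarith [aK_ub]
  calc Real.sqrt aK ≤ Real.sqrt ((1.28:ℝ)^2) := Real.sqrt_le_sqrt this
    _ = 1.28 := by rw [Real.sqrt_sq]; norm_num

lemma f₀_hasDeriv (x : ℝ) :
    HasDerivAt f₀ ((Real.cosh (Real.sqrt aK * x) - Real.cos (Real.sqrt bK * x)) / Real.sqrt 5) x := by
  have h1 : HasDerivAt (fun x : ℝ => Real.sinh (Real.sqrt aK * x))
      (Real.cosh (Real.sqrt aK * x) * Real.sqrt aK) x := by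
    have := (Real.hasDerivAt_sinh (Real.sqrt aK * x)).comp x
      ((hasDerivAt_id x).const_mul (Real.sqrt aK))
    simp at this
    exact this
  have h2 : HasDerivAt (fun x : ℝ => Real.sin (Real.sqrt bK * x))
      (Real.cos (Real.sqrt bK * x) * Real.sqrt bK) x := by
    have := (Real.hasDerivAt_sin (Real.sqrt bK * x)).comp x
      ((hasDerivAt_id x).const_mul (Real.sqrt bK))
    simp at this
    exact this
  have h := ((h1.const_mul (1 / (Real.sqrt aK * (aK + bK)))).sub
    (h2.const_mul (1 / (Real.sqrt bK * (aK + bK)))))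
  refine h.congr_deriv ?_
  rw [← sum_eq]
  have ha := sqrt_aK_pos.ne'
  have hb := sqrt_bK_pos.ne'
  have hs : aK + bK ≠ 0 := ne_of_gt (by linarith [aK_pos, bK_pos])
  field_simp

lemma f₀_zero : f₀ 0 = 0 := by simp [f₀]

lemma f₀_mono : Monotone f₀ := by
  apply monotone_of_deriv_nonneg
  · exact fun x => (f₀_hasDeriv x).differentiableAt
  · intro x
    rw [(f₀_hasDeriv x).deriv]
    have h1 := Real.one_le_cosh (Real.sqrt aK * x)
    have h2 := Real.cos_le_one (Real.sqrt bK * x)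
    exact div_nonneg (by linarith) (Real.sqrt_nonneg 5)

lemma deriv_le_one {x : ℝ} (hx : x ∈ Set.Icc (-1:ℝ) 0) :
    (Real.cosh (Real.sqrt aK * x) - Real.cos (Real.sqrt bK * x)) / Real.sqrt 5 ≤ 1 := by
  obtain ⟨hx1, hx0⟩ := hx
  -- cosh bound
  have habs : |Real.sqrt aK * x| ≤ |(1.28 : ℝ)| := by
    rw [abs_mul, abs_of_nonneg (Real.sqrt_nonneg _)]
    have : |x| ≤ 1 := abs_le.2 ⟨hx1, by linarith⟩
    calc Real.sqrt aK * |x| ≤ 1.28 * 1 := by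
          apply mul_le_mul sqrt_aK_ub this (abs_nonneg x) (by norm_num)
      _ = |(1.28:ℝ)| := by rw [abs_of_nonneg] <;> norm_num
  have hcosh : Real.cosh (Real.sqrt aK * x) ≤ Real.cosh 1.28 :=
    Real.cosh_le_cosh.2 habs
  have hexp128 : Real.exp 1.28 ≤ 3.776 := by
    have he1 : Real.exp 1 ≤ 2.7182818286 := Real.exp_one_lt_d9.le
    have he2 : Real.exp 0.28 ≤ 1 / 0.72 := by
      have h := Real.add_one_le_exp (-0.28 : ℝ)
      have hp : (0:ℝ) < Real.exp 0.28 := Real.exp_pos _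
      rw [Real.exp_neg] at h
      rw [le_div_iff₀ (by norm_num : (0:ℝ) < 0.72)]
      have hinv : Real.exp 0.28 * (Real.exp 0.28)⁻¹ = 1 := mul_inv_cancel₀ hp.ne'
      nlinarith
    calc Real.exp 1.28 = Real.exp 1 * Real.exp 0.28 := by
          rw [← Real.exp_add]; norm_num
      _ ≤ 2.7182818286 * (1 / 0.72) := by
          apply mul_le_mul he1 he2 (Real.exp_pos _).le (by norm_num)
      _ ≤ 3.776 := by norm_num
  have hcosh2 : Real.cosh (1.28 : ℝ) ≤ 2.388 := by
    rw [Real.cosh_eq]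
    have : Real.exp (-1.28 : ℝ) ≤ 1 := Real.exp_le_one_iff.2 (by norm_num)
    linarith
  -- cos bound
  have hcos : (0.69 : ℝ) ≤ Real.cos (Real.sqrt bK * x) := by
    have h := Real.one_sub_sq_div_two_le_cos (x := Real.sqrt bK * x)
    have hsq : (Real.sqrt bK * x)^2 ≤ 0.62 := by
      have hb2 : Real.sqrt bK ^ 2 = bK := Real.sq_sqrt bK_pos.le
      have hx2 : x^2 ≤ 1 := by nlinarith
      calc (Real.sqrt bK * x)^2 = bK * x^2 := by rw [mul_pow, hb2]
        _ ≤ 0.62 * 1 := by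
            apply mul_le_mul bK_ub hx2 (sq_nonneg x) (by norm_num)
        _ = 0.62 := by norm_num
    linarith
  have h5 := sqrt5_lb
  rw [div_le_one (by linarith)]
  linarith

theorem f₀_bounds :
    ∀ x ∈ Set.Icc (-1 : ℝ) 0, x ≤ f₀ x ∧ f₀ x ≤ 0 ∧ |f₀ x| ≤ |x| := by
  intro x hx
  obtain ⟨hx1, hx0⟩ := hx
  have hub : f₀ x ≤ 0 := by
    have := f₀_mono hx0
    rwa [f₀_zero] at this
  have hlb : x ≤ f₀ x := by
    have hanti : AntitoneOn (fun x => f₀ x - x) (Set.Icc (-1:ℝ) 0) := by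
      apply antitoneOn_of_deriv_nonpos (convex_Icc _ _)
      · exact (((Differentiable.continuous (fun x => (f₀_hasDeriv x).differentiableAt)).sub continuous_id)).continuousOn
      · intro y hy
        exact ((f₀_hasDeriv y).sub (hasDerivAt_id y)).differentiableAt.differentiableWithinAt
      · intro y hy
        rw [interior_Icc] at hy
        have hd : HasDerivAt (fun x => f₀ x - x)
            ((Real.cosh (Real.sqrt aK * y) - Real.cos (Real.sqrt bK * y)) / Real.sqrt 5 - 1) y :=
          (f₀_hasDeriv y).sub (hasDerivAt_id y)
        rw [hd.deriv]
        have := deriv_le_one (Set.mem_Icc.2 ⟨hy.1.le, hy.2.le⟩)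
        linarith
    have h := hanti (Set.mem_Icc.2 ⟨hx1, hx0⟩) (Set.mem_Icc.2 ⟨by norm_num, le_refl 0⟩) hx0
    simp only [f₀_zero] at h
    linarith
  refine ⟨hlb, hub, ?_⟩
  rw [abs_of_nonpos hub, abs_of_nonpos hx0]
  linarith
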